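/- arXiv:1703.08273 — 3 statements merged into one kernel-verified Lean document; each statement's English description precedes it below -/
import Mathlib

section
/- Fix real numbers n > 0, N > 0 and c ≥ 0, and define Δ₁(δ) = c + sqrt(2 log(2/δ)/n) and Δ₂(δ) = sqrt((log(2N) + log(1/δ))/(2n)) for δ > 0. Then the ratio Δ₁(δ)/Δ₂(δ) tends to 2 as δ tends to 0 from the right. -/
open Filter Real

private lemma aux_sqrt_atTop : Tendsto Real.sqrt atTop atTop := by
  refine tendsto_atTop_atTop.mpr fun b => ⟨b ^ 2, fun a ha => ?_⟩
  calc b ≤ |b| := le_abs_self b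
    _ = Real.sqrt (b ^ 2) := (Real.sqrt_sq_eq_abs b).symm
    _ ≤ Real.sqrt a := Real.sqrt_le_sqrt ha

private lemma aux_ratio (a b : ℝ) :
    Tendsto (fun t : ℝ => (a + t) / (b + t)) atTop (nhds 1) := by
  have hb : Tendsto (fun t : ℝ => b + t) atTop atTop :=
    tendsto_atTop_add_const_left _ _ tendsto_id
  have h0 : Tendsto (fun t : ℝ => 1 + (a - b) * (b + t)⁻¹) atTop (nhds (1 + (a - b) * 0)) :=
    tendsto_const_nhds.add (tendsto_const_nhds.mul hb.inv_tendsto_atTop)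
  rw [mul_zero, add_zero] at h0
  refine h0.congr' ?_
  filter_upwards [hb.eventually_gt_atTop 0] with t ht
  have : b + t ≠ 0 := ne_of_gt ht
  field_simp
  ring

private lemma aux_g (n N c : ℝ) (hn : 0 < n) (hN : 0 < N) (hc : 0 ≤ c) :
    Tendsto (fun t : ℝ => (c + Real.sqrt (2 * (Real.log 2 + t) / n)) /
      Real.sqrt ((Real.log (2 * N) + t) / (2 * n))) atTop (nhds 2) := by
  have hb : Tendsto (fun t : ℝ => Real.log (2 * N) + t) atTop atTop :=
    tendsto_atTop_add_const_left _ _ tendsto_id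
  have ha : Tendsto (fun t : ℝ => Real.log 2 + t) atTop atTop :=
    tendsto_atTop_add_const_left _ _ tendsto_id
  have hden : Tendsto (fun t : ℝ => Real.sqrt ((Real.log (2 * N) + t) / (2 * n))) atTop atTop :=
    aux_sqrt_atTop.comp (hb.atTop_div_const (by linarith))
  -- first term tends to 0
  have h1 : Tendsto (fun t : ℝ => c / Real.sqrt ((Real.log (2 * N) + t) / (2 * n)))
      atTop (nhds 0) := by
    have := tendsto_const_nhds (x := c) (f := atTop (α := ℝ)) |>.mul hden.inv_tendsto_atTop
    rw [mul_zero] at this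
    exact this.congr fun t => (div_eq_mul_inv _ _).symm
  -- second term tends to 2
  have h2 : Tendsto (fun t : ℝ => Real.sqrt (2 * (Real.log 2 + t) / n) /
      Real.sqrt ((Real.log (2 * N) + t) / (2 * n))) atTop (nhds 2) := by
    have hin : Tendsto (fun t : ℝ => 4 * ((Real.log 2 + t) / (Real.log (2 * N) + t)))
        atTop (nhds (4 * 1)) :=
      tendsto_const_nhds.mul (aux_ratio (Real.log 2) (Real.log (2 * N)))
    rw [mul_one] at hin
    have hsq : Tendsto (fun t : ℝ => Real.sqrt (4 * ((Real.log 2 + t) / (Real.log (2 * N) + t))))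
        atTop (nhds 2) := by
      have h := (Real.continuous_sqrt.tendsto 4).comp hin
      have h4 : Real.sqrt 4 = 2 := by
        rw [show (4:ℝ) = 2 ^ 2 by norm_num, Real.sqrt_sq (by norm_num)]
      rw [h4] at h
      exact h
    refine hsq.congr' ?_
    filter_upwards [hb.eventually_gt_atTop 0, ha.eventually_ge_atTop 0] with t htb hta
    have hbne : Real.log (2 * N) + t ≠ 0 := ne_of_gt htb
    rw [← Real.sqrt_div (by positivity)]
    congr 1
    field_simp
    ring
  have h3 := h1.add h2
  rw [zero_add] at h3
  exact h3.congr fun t => (add_div c _ (Real.sqrt ((Real.log (2 * N) + t) / (2 * n)))).symm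

/-- The ratio of the generic Rademacher-average-based bound
`Δ₁(δ) = c + sqrt(2 log(2/δ)/n)` to the union-bound/Hoeffding-based bound
`Δ₂(δ) = sqrt((log(2N) + log(1/δ))/(2n))` tends to `2` as `δ → 0⁺`. -/
theorem stmt7 (n N c : ℝ) (hn : 0 < n) (hN : 0 < N) (hc : 0 ≤ c) :
    Filter.Tendsto
      (fun δ : ℝ =>
        (c + Real.sqrt (2 * Real.log (2 / δ) / n)) /
          Real.sqrt ((Real.log (2 * N) + Real.log (1 / δ)) / (2 * n)))
      (nhdsWithin 0 (Set.Ioi 0)) (nhds 2) := by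
  have hlog : Tendsto (fun δ : ℝ => Real.log (1 / δ)) (nhdsWithin 0 (Set.Ioi 0)) atTop := by
    have h := tendsto_neg_atBot_atTop.comp Real.tendsto_log_nhdsGT_zero
    refine h.congr fun δ => ?_
    simp [Function.comp, one_div, Real.log_inv]
  have hg := (aux_g n N c hn hN hc).comp hlog
  refine hg.congr' ?_
  filter_upwards [self_mem_nhdsWithin] with δ (hδ : δ ∈ Set.Ioi 0)
  have hδ0 : (0:ℝ) < δ := hδ
  have key : Real.log 2 + Real.log (1 / δ) = Real.log (2 / δ) := by
    rw [Real.log_div (show (2:ℝ) ≠ 0 by norm_num) hδ0.ne', one_div, Real.log_inv]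
    ring
  simp only [Function.comp]
  rw [key]
end

section
/- Let I be a finite set, let τ₁,…,τₙ be fixed transactions (subsets of I), and let σ₁,…,σₙ be independent Rademacher random variables, each uniform on {−1, 1}. Define the conditional Rademacher average R_S = E_σ[ max_{A⊆I} (1/n) Σ_{i=1}^n σᵢ φ_A(τᵢ) ] and, for s > 0, w(s) = (1/s) log Σ_{A⊆I} exp( s² (Σ_{i=1}^n φ_A(τᵢ)²) / (2n²) ), where the sum ranges over all 2^{|I|} subsets A of I. Then R_S ≤ w(s) for every s > 0, and hence R_S ≤ inf_{s>0} w(s). -/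
open MeasureTheory Finset

/-- Indicator of itemset `A` appearing in transaction `τ`. -/
noncomputable def phi {I : Type*} [DecidableEq I] (A τ : Finset I) : ℝ :=
  if A ⊆ τ then 1 else 0

/-- The sign `±1` associated to a Boolean coin flip. -/
noncomputable def sign (b : Bool) : ℝ := if b then 1 else -1

/-- The distribution of `n` independent Rademacher variables: the `n`-fold product of the
uniform measure on `{−1, 1}` (encoded by `Bool` via `sign`). -/
noncomputable def radMeasure (n : ℕ) : Measure (Fin n → Bool) :=
  Measure.pi fun _ => (PMF.uniformOfFintype Bool).toMeasure

/-- The conditional Rademacher average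
`R_S = E_σ [ max_{A ⊆ I} (1/n) ∑ i, σ i * φ_A (τ i) ]` for a fixed sample `τ`. -/
noncomputable def radAvg {I : Type*} [Fintype I] [DecidableEq I] {n : ℕ}
    (τ : Fin n → Finset I) : ℝ :=
  ∫ σ : Fin n → Bool,
    (Finset.univ.sup' ⟨∅, Finset.mem_univ ∅⟩
      fun A : Finset I => (∑ i, sign (σ i) * phi A (τ i)) / n) ∂(radMeasure n)

/-- Auxiliary: `exp` of `s` times a finite max is at most the sum of the `exp`s. -/
lemma exp_mul_sup'_le_sum {I : Type*} [Fintype I] [DecidableEq I]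
    (f : Finset I → ℝ) (s : ℝ) :
    Real.exp (s * Finset.univ.sup' ⟨∅, Finset.mem_univ ∅⟩ f) ≤
    ∑ A : Finset I, Real.exp (s * f A) := by
  obtain ⟨A0, -, hA0⟩ := Finset.exists_mem_eq_sup'
    (s := (Finset.univ : Finset (Finset I))) ⟨∅, Finset.mem_univ ∅⟩ f
  rw [hA0]
  exact Finset.single_le_sum (f := fun A => Real.exp (s * f A))
    (fun A _ => (Real.exp_pos _).le) (Finset.mem_univ A0)

set_option maxHeartbeats 1000000 in
/-- Riondato–Upfal's Theorem 3, revised: for every `s > 0`,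
`R_S ≤ w(s) = (1/s) log ∑_{A ⊆ I} exp(s² (∑ i, φ_A(τ i)²) / (2n²))`,
where the sum ranges over all `2^|I|` itemsets; hence `R_S ≤ inf_{s > 0} w(s)`. -/
theorem stmt10 {I : Type*} [Fintype I] [DecidableEq I] (n : ℕ) (hn : 0 < n)
    (τ : Fin n → Finset I) :
    (∀ s : ℝ, 0 < s → radAvg τ ≤
      (1 / s) * Real.log (∑ A : Finset I,
        Real.exp (s ^ 2 * (∑ i, phi A (τ i) ^ 2) / (2 * n ^ 2)))) ∧
    radAvg τ ≤ ⨅ s : Set.Ioi (0 : ℝ),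
      (1 / (s : ℝ)) * Real.log (∑ A : Finset I,
        Real.exp ((s : ℝ) ^ 2 * (∑ i, phi A (τ i) ^ 2) / (2 * n ^ 2))) := by
  classical
  have hn' : (n : ℝ) ≠ 0 := Nat.cast_ne_zero.mpr hn.ne'
  set g : (Fin n → Bool) → ℝ := fun σ =>
    Finset.univ.sup' ⟨∅, Finset.mem_univ ∅⟩
      (fun A : Finset I => (∑ i, sign (σ i) * phi A (τ i)) / n) with hg
  -- Step 1: the integral is a finite average
  have hR : radAvg τ = ∑ σ : Fin n → Bool, (1/2:ℝ)^n * g σ := by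
    have : IsProbabilityMeasure (radMeasure n) := by unfold radMeasure; infer_instance
    rw [radAvg, integral_fintype (Integrable.of_finite)]
    refine Finset.sum_congr rfl fun σ _ => ?_
    have h1 : ((radMeasure n) {σ}).toReal = (1/2 : ℝ) ^ n := by
      have h2 : ({σ} : Set (Fin n → Bool)) = Set.pi Set.univ fun i => {σ i} :=
        (Set.univ_pi_singleton σ).symm
      rw [radMeasure, h2, Measure.pi_pi]
      simp [PMF.toMeasure_apply_singleton _ _ (measurableSet_singleton _),
        PMF.uniformOfFintype_apply, ENNReal.toReal_pow]
    rw [measureReal_def, h1, smul_eq_mul]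
  have key : ∀ s : ℝ, 0 < s → radAvg τ ≤
      (1 / s) * Real.log (∑ A : Finset I,
        Real.exp (s ^ 2 * (∑ i, phi A (τ i) ^ 2) / (2 * n ^ 2))) := by
    intro s hs
    set T : ℝ := ∑ A : Finset I, Real.exp (s ^ 2 * (∑ i, phi A (τ i) ^ 2) / (2 * n ^ 2)) with hT
    have hTpos : 0 < T :=
      Finset.sum_pos (fun A _ => Real.exp_pos _) ⟨∅, Finset.mem_univ ∅⟩
    rw [one_div, inv_mul_eq_div, le_div_iff₀ hs, ← Real.exp_le_exp,
      Real.exp_log hTpos]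
    -- Jensen's inequality for exp
    have hw : ∑ _σ : Fin n → Bool, (1/2:ℝ)^n = 1 := by
      have hcard : (Fintype.card (Fin n → Bool)) = 2 ^ n := by simp
      rw [Finset.sum_const, Finset.card_univ, hcard, nsmul_eq_mul]
      push_cast
      rw [← mul_pow]
      norm_num
    have jensen : Real.exp (radAvg τ * s) ≤
        ∑ σ : Fin n → Bool, (1/2:ℝ)^n * Real.exp (s * g σ) := by
      have := convexOn_exp.map_sum_le (t := Finset.univ)
        (w := fun _ : Fin n → Bool => (1/2:ℝ)^n) (p := fun σ => s * g σ)
        (fun _ _ => by positivity) hw (fun _ _ => Set.mem_univ _)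
      simpa [smul_eq_mul, hR, Finset.sum_mul, mul_comm, mul_left_comm, mul_assoc,
        Finset.mul_sum] using this
    -- bound exp of max by sum of exps
    have hmax : ∀ σ, Real.exp (s * g σ) ≤
        ∑ A : Finset I, Real.exp (s * ((∑ i, sign (σ i) * phi A (τ i)) / n)) := by
      intro σ
      exact exp_mul_sup'_le_sum (fun A : Finset I => (∑ i, sign (σ i) * phi A (τ i)) / n) s
    -- per itemset bound via factorization over coordinates
    have hfac : ∀ A : Finset I,
        ∑ σ : Fin n → Bool, (1/2:ℝ)^n *
          Real.exp (s * ((∑ i, sign (σ i) * phi A (τ i)) / n)) ≤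
        Real.exp (s ^ 2 * (∑ i, phi A (τ i) ^ 2) / (2 * n ^ 2)) := by
      intro A
      have step1 : ∀ σ : Fin n → Bool, (1/2:ℝ)^n *
            Real.exp (s * ((∑ i, sign (σ i) * phi A (τ i)) / n)) =
          ∏ i, ((1/2:ℝ) * Real.exp ((s / n) * sign (σ i) * phi A (τ i))) := by
        intro σ
        rw [Finset.prod_mul_distrib, Finset.prod_const, Finset.card_univ,
          Fintype.card_fin, ← Real.exp_sum]
        congr 1
        rw [Real.exp_eq_exp]
        simp only [mul_assoc]
        rw [← Finset.mul_sum]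
        ring
      calc ∑ σ : Fin n → Bool, (1/2:ℝ)^n *
            Real.exp (s * ((∑ i, sign (σ i) * phi A (τ i)) / n))
          = ∑ σ : Fin n → Bool,
            ∏ i, ((1/2:ℝ) * Real.exp ((s / n) * sign (σ i) * phi A (τ i))) :=
            Finset.sum_congr rfl fun σ _ => step1 σ
        _ = ∏ i, ∑ b : Bool, ((1/2:ℝ) * Real.exp ((s / n) * sign b * phi A (τ i))) :=
            (Fintype.prod_sum
              (fun (i : Fin n) (b : Bool) =>
                (1/2:ℝ) * Real.exp ((s / n) * sign b * phi A (τ i)))).symm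
        _ = ∏ i, Real.cosh ((s / n) * phi A (τ i)) := by
            refine Finset.prod_congr rfl fun i _ => ?_
            rw [Real.cosh_eq]
            simp [sign, Fintype.sum_bool]
            ring
        _ ≤ ∏ i, Real.exp (((s / n) * phi A (τ i)) ^ 2 / 2) := by
            refine Finset.prod_le_prod (fun i _ => (Real.cosh_pos _).le) fun i _ =>
              Real.cosh_le_exp_half_sq _
        _ = Real.exp (s ^ 2 * (∑ i, phi A (τ i) ^ 2) / (2 * n ^ 2)) := by
            rw [← Real.exp_sum]
            congr 1
            rw [Finset.mul_sum, Finset.sum_div]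
            refine Finset.sum_congr rfl fun i _ => ?_
            field_simp
    calc Real.exp (radAvg τ * s)
        ≤ ∑ σ : Fin n → Bool, (1/2:ℝ)^n * Real.exp (s * g σ) := jensen
      _ ≤ ∑ σ : Fin n → Bool, (1/2:ℝ)^n *
            ∑ A : Finset I, Real.exp (s * ((∑ i, sign (σ i) * phi A (τ i)) / n)) := by
          refine Finset.sum_le_sum fun σ _ => ?_
          exact mul_le_mul_of_nonneg_left (hmax σ) (by positivity)
      _ = ∑ A : Finset I, ∑ σ : Fin n → Bool, (1/2:ℝ)^n *
            Real.exp (s * ((∑ i, sign (σ i) * phi A (τ i)) / n)) := by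
          rw [Finset.sum_comm]
          exact Finset.sum_congr rfl fun σ _ => Finset.mul_sum _ _ _
      _ ≤ T := Finset.sum_le_sum fun A _ => hfac A
  refine ⟨key, ?_⟩
  haveI : Nonempty (Set.Ioi (0:ℝ)) := ⟨⟨1, by norm_num⟩⟩
  exact le_ciInf fun s => key s s.2
end

section
/- Let Ob be a nonempty finite collection of itemsets (subsets of I), let m be a fixed real number, and let τ₁,…,τₙ be i.i.d. random transactions each distributed uniformly on the finite nonempty dataset D. Then the probability that there exists A ∈ Ob whose true frequency f_D(A) and sampled frequency f_S(A) lie strictly on opposite sides of m (i.e., f_D(A) < m < f_S(A) or f_S(A) < m < f_D(A)) is at most Σ_{A∈Ob} exp(−2n (f_D(A) − m)²). -/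
open MeasureTheory Finset

/-- True frequency of itemset `A` in the dataset `D` (a finite nonempty family of
transactions, with multiplicities, indexed by `Fin m`). -/
noncomputable def trueFreq {I : Type*} [DecidableEq I] {m : ℕ} (D : Fin m → Finset I)
    (A : Finset I) : ℝ :=
  (∑ j, phi A (D j)) / m

/-- Sampled frequency of itemset `A` for the sample of transactions `D (ω 1), …, D (ω n)`. -/
noncomputable def sampFreq {I : Type*} [DecidableEq I] {m n : ℕ} (D : Fin m → Finset I)
    (A : Finset I) (ω : Fin n → Fin m) : ℝ :=
  (∑ i, phi A (D (ω i))) / n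

/-- The distribution of `n` i.i.d. samples, each uniform on the dataset indices `Fin m`:
the `n`-fold product of the uniform probability measure. -/
noncomputable def sampleMeasure (m n : ℕ) [NeZero m] : Measure (Fin n → Fin m) :=
  Measure.pi fun _ => (PMF.uniformOfFintype (Fin m)).toMeasure

open Real

set_option linter.unnecessarySeqFocus false

lemma bernoulli_mgf_aux {p : ℝ} (hp0 : 0 ≤ p) (hp1 : p ≤ 1) (s : ℝ) (hs : 0 ≤ s) :
    p * exp s + (1 - p) ≤ exp (s * p + s ^ 2 / 8) := by
  set c : ℝ → ℝ := fun u => p * exp u + (1 - p) with hc_def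
  have hc : ∀ u, 0 < c u := by
    intro u
    have hu := exp_pos u
    simp only [hc_def]
    nlinarith [mul_nonneg hp0 hu.le, mul_nonneg (sub_nonneg.2 hp1) hu.le]
  have hcd : ∀ u, HasDerivAt c (p * exp u) u := by
    intro u
    exact ((Real.hasDerivAt_exp u).const_mul p).add_const (1 - p)
  set h1 : ℝ → ℝ := fun u => p + u / 4 - p * exp u / c u with h1_def
  -- derivative of h1
  have h1d : ∀ u, HasDerivAt h1
      (1 / 4 - (p * exp u * c u - p * exp u * (p * exp u)) / (c u) ^ 2) u := by
    intro u
    have hnum : HasDerivAt (fun u => p * exp u) (p * exp u) u :=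
      (Real.hasDerivAt_exp u).const_mul p
    have hdiv : HasDerivAt (fun u => p * exp u / c u)
        ((p * exp u * c u - p * exp u * (p * exp u)) / (c u) ^ 2) u :=
      hnum.div (hcd u) (hc u).ne'
    have hlin : HasDerivAt (fun u : ℝ => p + u / 4) (1 / 4) u := by
      simpa using ((hasDerivAt_id u).div_const 4).const_add p
    exact hlin.sub hdiv
  have h1mono : Monotone h1 := by
    apply monotone_of_deriv_nonneg
    · intro u; exact (h1d u).differentiableAt
    · intro u
      rw [(h1d u).deriv]
      have hcu := hc u
      have he := exp_pos u
      rw [sub_nonneg, div_le_iff₀ (by positivity)]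
      have : c u = p * exp u + (1 - p) := rfl
      nlinarith [sq_nonneg (p * exp u - (1 - p))]
  have h10 : h1 0 = 0 := by
    simp only [h1_def, hc_def, exp_zero, mul_one]
    field_simp
    ring
  have h1nonneg : ∀ u, 0 ≤ u → 0 ≤ h1 u := by
    intro u hu
    have := h1mono hu
    rw [h10] at this; exact this
  set h : ℝ → ℝ := fun u => u * p + u ^ 2 / 8 - log (c u) with h_def
  have hd : ∀ u, HasDerivAt h (h1 u) u := by
    intro u
    have hlog : HasDerivAt (fun u => log (c u)) (p * exp u / c u) u :=
      (hcd u).log (hc u).ne'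
    have hpoly : HasDerivAt (fun u : ℝ => u * p + u ^ 2 / 8) (p + u / 4) u := by
      have h1' : HasDerivAt (fun u : ℝ => u * p) p u := by simpa using (hasDerivAt_id u).mul_const p
      have h2' : HasDerivAt (fun u : ℝ => u ^ 2 / 8) (u / 4) u := by
        have := (hasDerivAt_pow 2 u).div_const 8
        simpa using this.congr_deriv (by ring)
      exact h1'.add h2'
    exact hpoly.sub hlog
  have hmono : MonotoneOn h (Set.Ici 0) := by
    apply monotoneOn_of_deriv_nonneg (convex_Ici 0)
    · exact fun u _ => ((hd u).differentiableAt.continuousAt).continuousWithinAt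
    · intro u _; exact (hd u).differentiableAt.differentiableWithinAt
    · intro u hu
      rw [(hd u).deriv]
      exact h1nonneg u (le_of_lt (by simpa using hu))
  have h0 : h 0 = 0 := by
    simp [h_def, hc_def]
  have hge : 0 ≤ h s := by
    have := hmono (Set.self_mem_Ici) (Set.mem_Ici.2 hs) hs
    rw [h0] at this; exact this
  have hlog_le : log (c s) ≤ s * p + s ^ 2 / 8 := by
    simp only [h_def] at hge; linarith
  calc p * exp s + (1 - p) = exp (log (c s)) := (exp_log (hc s)).symm
    _ ≤ exp (s * p + s ^ 2 / 8) := exp_le_exp.2 hlog_le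

lemma bernoulli_mgf {p : ℝ} (hp0 : 0 ≤ p) (hp1 : p ≤ 1) (s : ℝ) :
    p * exp s + (1 - p) ≤ exp (s * p + s ^ 2 / 8) := by
  rcases le_or_gt 0 s with hs | hs
  · exact bernoulli_mgf_aux hp0 hp1 s hs
  · have h := bernoulli_mgf_aux (p := 1 - p) (by linarith) (by linarith) (-s) (by linarith)
    have he := exp_pos s
    have key : ((1 - p) * exp (-s) + (1 - (1 - p))) * exp s ≤
        exp (-s * (1 - p) + (-s) ^ 2 / 8) * exp s :=
      mul_le_mul_of_nonneg_right h he.le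
    rw [← exp_add] at key
    have h1 : ((1 - p) * exp (-s) + (1 - (1 - p))) * exp s = (1 - p) * (exp (-s) * exp s) + p * exp s := by ring
    rw [h1, ← exp_add, neg_add_cancel, exp_zero] at key
    have h2 : -s * (1 - p) + (-s) ^ 2 / 8 + s = s * p + s ^ 2 / 8 := by ring
    rw [h2] at key
    linarith

lemma phi_mem {I : Type*} [DecidableEq I] (A τ : Finset I) : phi A τ = 0 ∨ phi A τ = 1 := by
  unfold phi; split <;> simp

lemma trueFreq_nonneg {I : Type*} [DecidableEq I] {m : ℕ} (D : Fin m → Finset I)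
    (A : Finset I) : 0 ≤ trueFreq D A := by
  apply div_nonneg _ (Nat.cast_nonneg m)
  apply Finset.sum_nonneg
  intro j _; rcases phi_mem A (D j) with h | h <;> rw [h] <;> norm_num

lemma trueFreq_le_one {I : Type*} [DecidableEq I] {m : ℕ} [NeZero m] (D : Fin m → Finset I)
    (A : Finset I) : trueFreq D A ≤ 1 := by
  have hm : (0:ℝ) < m := by exact_mod_cast Nat.pos_of_ne_zero (NeZero.ne m)
  rw [trueFreq, div_le_one hm]
  calc ∑ j, phi A (D j) ≤ ∑ _j : Fin m, 1 := by
        apply Finset.sum_le_sum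
        intro j _; rcases phi_mem A (D j) with h | h <;> rw [h] <;> norm_num
    _ = m := by simp

-- per-coordinate mgf computation
lemma coord_mgf {I : Type*} [DecidableEq I] {m : ℕ} [NeZero m] (D : Fin m → Finset I)
    (A : Finset I) (s : ℝ) :
    ∑ j : Fin m, (1 / (m:ℝ)) * exp (s * phi A (D j))
      = trueFreq D A * exp s + (1 - trueFreq D A) := by
  have hm : (0:ℝ) < m := by exact_mod_cast Nat.pos_of_ne_zero (NeZero.ne m)
  have hterm : ∀ j, exp (s * phi A (D j)) = phi A (D j) * exp s + (1 - phi A (D j)) := by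
    intro j
    rcases phi_mem A (D j) with h | h <;> rw [h] <;> simp
  simp_rw [hterm]
  rw [← Finset.mul_sum, Finset.sum_add_distrib, ← Finset.sum_mul, Finset.sum_sub_distrib,
    Finset.sum_const, trueFreq]
  field_simp
  simp [Finset.card_univ]


lemma sum_prod_pow {n m : ℕ} (g : Fin m → ℝ) :
    ∑ ω : Fin n → Fin m, ∏ i : Fin n, g (ω i) = (∑ j : Fin m, g j) ^ n := by
  classical
  have h := Finset.prod_univ_sum (fun _ : Fin n => (Finset.univ : Finset (Fin m))) (fun _ j => g j)
  rw [Fintype.piFinset_univ] at h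
  rw [← h, Finset.prod_const, Finset.card_univ, Fintype.card_fin]

lemma chernoff_core {I : Type*} [DecidableEq I] {m n : ℕ} [NeZero m]
    (D : Fin m → Finset I) (A : Finset I) (σ t a : ℝ)
    (hσ : σ = 1 ∨ σ = -1) (ht : 0 ≤ t)
    (E : Finset (Fin n → Fin m)) (hE : ∀ ω ∈ E, a ≤ σ * ∑ i, phi A (D (ω i))) :
    ∑ _ω ∈ E, (1 / (m:ℝ)) ^ n
      ≤ exp (n * (t * σ * trueFreq D A + t ^ 2 / 8) - t * a) := by
  have hm : (0:ℝ) < m := by exact_mod_cast Nat.pos_of_ne_zero (NeZero.ne m)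
  set p := trueFreq D A with hp
  -- pointwise bound
  have step1 : ∀ ω ∈ E, (1 / (m:ℝ)) ^ n
      ≤ exp (-(t * a)) * ∏ i, (1 / (m:ℝ)) * exp (t * σ * phi A (D (ω i))) := by
    intro ω hω
    have hEω := hE ω hω
    set S := ∑ i, phi A (D (ω i)) with hS
    have hsum : ∑ i, t * σ * phi A (D (ω i)) = t * σ * S := by
      rw [hS, Finset.mul_sum]
    have hprod : ∏ i, (1 / (m:ℝ)) * exp (t * σ * phi A (D (ω i)))
        = (1 / (m:ℝ)) ^ n * exp (t * σ * S) := by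
      rw [Finset.prod_mul_distrib, Finset.prod_const, Finset.card_univ, Fintype.card_fin,
        ← Real.exp_sum, hsum]
    rw [hprod, ← mul_assoc, mul_comm (exp (-(t*a))), mul_assoc, ← Real.exp_add]
    have h1 : (1:ℝ) ≤ exp (-(t * a) + t * σ * S) := by
      rw [← Real.exp_zero]
      apply Real.exp_le_exp.2
      nlinarith [mul_nonneg ht (sub_nonneg.2 hEω)]
    nlinarith [pow_pos (by positivity : (0:ℝ) < 1 / (m:ℝ)) n]
  have step2 : ∑ _ω ∈ E, (1 / (m:ℝ)) ^ n
      ≤ ∑ ω : Fin n → Fin m, exp (-(t * a)) * ∏ i, (1 / (m:ℝ)) * exp (t * σ * phi A (D (ω i))) := by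
    refine (Finset.sum_le_sum step1).trans ?_
    apply Finset.sum_le_sum_of_subset_of_nonneg (Finset.subset_univ E)
    intro ω _ _
    positivity
  rw [← Finset.mul_sum] at step2
  have step3 : ∑ ω : Fin n → Fin m, ∏ i, (1 / (m:ℝ)) * exp (t * σ * phi A (D (ω i)))
      = (p * exp (t * σ) + (1 - p)) ^ n := by
    rw [sum_prod_pow (fun j => (1 / (m:ℝ)) * exp (t * σ * phi A (D j))), coord_mgf D A (t * σ)]
  rw [step3] at step2
  refine step2.trans ?_
  have hmgf : p * exp (t * σ) + (1 - p) ≤ exp (t * σ * p + t ^ 2 / 8) := by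
    have := bernoulli_mgf (trueFreq_nonneg D A) (trueFreq_le_one D A) (t * σ)
    have hσ2 : (t * σ) ^ 2 = t ^ 2 := by rcases hσ with h | h <;> rw [h] <;> ring
    rw [hσ2] at this
    exact this
  have hbase : (0:ℝ) ≤ p * exp (t * σ) + (1 - p) := by
    have h1 := trueFreq_nonneg D A
    have h2 := trueFreq_le_one D A
    have := exp_pos (t * σ)
    nlinarith
  calc exp (-(t * a)) * (p * exp (t * σ) + (1 - p)) ^ n
      ≤ exp (-(t * a)) * (exp (t * σ * p + t ^ 2 / 8)) ^ n := by
        apply mul_le_mul_of_nonneg_left _ (exp_pos _).le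
        exact pow_le_pow_left₀ hbase hmgf n
    _ = exp (n * (t * σ * p + t ^ 2 / 8) - t * a) := by
        rw [← Real.exp_nat_mul, ← Real.exp_add]
        congr 1; ring

lemma sampleMeasure_singleton (m n : ℕ) [NeZero m] (ω : Fin n → Fin m) :
    sampleMeasure m n {ω} = ENNReal.ofReal ((1 / (m:ℝ)) ^ n) := by
  have hm : (0:ℝ) < m := by exact_mod_cast Nat.pos_of_ne_zero (NeZero.ne m)
  rw [sampleMeasure, ← Set.univ_pi_singleton ω, Measure.pi_pi]
  have h : ∀ i : Fin n, (PMF.uniformOfFintype (Fin m)).toMeasure {ω i} = ((m : ENNReal))⁻¹ := by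
    intro i
    rw [PMF.toMeasure_apply_singleton _ _ (measurableSet_singleton _),
      PMF.uniformOfFintype_apply, Fintype.card_fin]
  rw [Finset.prod_congr rfl (fun i _ => h i), Finset.prod_const, Finset.card_univ,
    Fintype.card_fin, ENNReal.ofReal_pow (by positivity), one_div,
    ENNReal.ofReal_inv_of_pos hm, ENNReal.ofReal_natCast]

lemma sampleMeasure_le_sum (m n : ℕ) [NeZero m] (S : Set (Fin n → Fin m))
    (E : Finset (Fin n → Fin m)) (hSE : ∀ ω ∈ S, ω ∈ E) :
    sampleMeasure m n S ≤ ENNReal.ofReal (∑ _ω ∈ E, (1 / (m:ℝ)) ^ n) := by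
  have hsub : S ⊆ ⋃ ω ∈ E, ({ω} : Set (Fin n → Fin m)) := fun x hx =>
    Set.mem_biUnion (hSE x hx) rfl
  calc sampleMeasure m n S ≤ sampleMeasure m n (⋃ ω ∈ E, {ω}) := measure_mono hsub
    _ ≤ ∑ ω ∈ E, sampleMeasure m n {ω} := measure_biUnion_finset_le E _
    _ = ∑ _ω ∈ E, ENNReal.ofReal ((1 / (m:ℝ)) ^ n) :=
        Finset.sum_congr rfl fun ω _ => sampleMeasure_singleton m n ω
    _ = ENNReal.ofReal (∑ _ω ∈ E, (1 / (m:ℝ)) ^ n) :=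
        (ENNReal.ofReal_sum_of_nonneg fun _ _ => by positivity).symm

theorem stmt12 {I : Type*} [DecidableEq I] (Ob : Finset (Finset I)) (hOb : Ob.Nonempty)
    (m n : ℕ) [NeZero m] (hn : 0 < n)
    (D : Fin m → Finset I) (mid : ℝ) :
    sampleMeasure m n {ω | ∃ A ∈ Ob,
        (trueFreq D A < mid ∧ mid < sampFreq D A ω) ∨
        (sampFreq D A ω < mid ∧ mid < trueFreq D A)}
      ≤ ENNReal.ofReal (∑ A ∈ Ob, Real.exp (-2 * n * (trueFreq D A - mid) ^ 2)) := by
  classical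
  have hn' : (0:ℝ) < n := by exact_mod_cast hn
  have hsetof : {ω : Fin n → Fin m | ∃ A ∈ Ob,
        (trueFreq D A < mid ∧ mid < sampFreq D A ω) ∨
        (sampFreq D A ω < mid ∧ mid < trueFreq D A)}
      = ⋃ A ∈ Ob, {ω | (trueFreq D A < mid ∧ mid < sampFreq D A ω) ∨
        (sampFreq D A ω < mid ∧ mid < trueFreq D A)} := by
    ext ω; simp
  rw [hsetof, ENNReal.ofReal_sum_of_nonneg fun A _ => (Real.exp_pos _).le]
  refine (measure_biUnion_finset_le Ob _).trans (Finset.sum_le_sum fun A hA => ?_)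
  set p := trueFreq D A with hp
  rcases lt_trichotomy p mid with hlt | heq | hgt
  · -- p < mid : upper tail
    set t : ℝ := 4 * (mid - p) with htdef
    have ht : 0 ≤ t := by rw [htdef]; linarith
    set E : Finset (Fin n → Fin m) :=
      Finset.univ.filter (fun ω => (n:ℝ) * mid ≤ 1 * ∑ i, phi A (D (ω i))) with hE
    have hmem : ∀ ω ∈ {ω : Fin n → Fin m |
        (trueFreq D A < mid ∧ mid < sampFreq D A ω) ∨
        (sampFreq D A ω < mid ∧ mid < trueFreq D A)}, ω ∈ E := by
      intro ω hω
      rw [hE, Finset.mem_filter]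
      refine ⟨Finset.mem_univ ω, ?_⟩
      rcases hω with ⟨_, h2⟩ | ⟨_, h2⟩
      · rw [sampFreq, lt_div_iff₀ hn'] at h2
        nlinarith
      · rw [← hp] at h2; linarith
    refine (sampleMeasure_le_sum m n _ E hmem).trans (ENNReal.ofReal_le_ofReal ?_)
    have hcc := chernoff_core D A 1 t ((n:ℝ) * mid) (Or.inl rfl) ht E
      (fun ω hω => (Finset.mem_filter.1 hω).2)
    rw [← hp] at hcc
    refine hcc.trans (le_of_eq ?_)
    congr 1
    rw [htdef]; ring
  · -- p = mid : empty event
    have hempty : {ω : Fin n → Fin m |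
        (trueFreq D A < mid ∧ mid < sampFreq D A ω) ∨
        (sampFreq D A ω < mid ∧ mid < trueFreq D A)} = ∅ := by
      ext ω
      simp only [Set.mem_setOf_eq, Set.mem_empty_iff_false, iff_false]
      rintro (⟨h1, _⟩ | ⟨_, h2⟩) <;> rw [← hp] at * <;> linarith
    rw [hempty, measure_empty]
    exact zero_le
  · -- mid < p : lower tail
    set t : ℝ := 4 * (p - mid) with htdef
    have ht : 0 ≤ t := by rw [htdef]; linarith
    set E : Finset (Fin n → Fin m) :=
      Finset.univ.filter (fun ω => -((n:ℝ) * mid) ≤ (-1) * ∑ i, phi A (D (ω i))) with hE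
    have hmem : ∀ ω ∈ {ω : Fin n → Fin m |
        (trueFreq D A < mid ∧ mid < sampFreq D A ω) ∨
        (sampFreq D A ω < mid ∧ mid < trueFreq D A)}, ω ∈ E := by
      intro ω hω
      rw [hE, Finset.mem_filter]
      refine ⟨Finset.mem_univ ω, ?_⟩
      rcases hω with ⟨h1, _⟩ | ⟨h1, _⟩
      · rw [← hp] at h1; linarith
      · rw [sampFreq, div_lt_iff₀ hn'] at h1
        nlinarith
    refine (sampleMeasure_le_sum m n _ E hmem).trans (ENNReal.ofReal_le_ofReal ?_)
    have hcc := chernoff_core D A (-1) t (-((n:ℝ) * mid)) (Or.inr rfl) ht E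
      (fun ω hω => (Finset.mem_filter.1 hω).2)
    rw [← hp] at hcc
    refine hcc.trans (le_of_eq ?_)
    congr 1
    rw [htdef]; ring
end
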